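/- arXiv:1404.7340 — 2 statements merged into one kernel-verified Lean document; each statement's English description precedes it below -/
import Mathlib

section
/- Let F : C₁ → C₂ be a functor, let (L₁, l₁) be a localization on C₁ and (L₂, l₂) a localization on C₂. Then F preserves local objects if and only if there is a natural transformation β : L₂ ∘ F → F ∘ L₁ such that β_X ∘ (l₂)_{FX} = F((l₁)_X) for every object X. When this holds, such β is unique, and β is a natural isomorphism if and only if F preserves equivalences. -/
open CategoryTheory

/-- A localization (reflection) on a category `C`: a functor `L : C ⥤ C` with a natural
transformation `l : 𝟭 C ⟶ L` such that `L (l X) = l (L X)` and these morphisms are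
isomorphisms. -/
structure LocalizationData (C : Type*) [Category C] where
  /-- the localization functor -/
  L : C ⥤ C
  /-- the unit -/
  l : 𝟭 C ⟶ L
  coincide : ∀ X : C, L.map (l.app X) = l.app (L.obj X)
  isIso : ∀ X : C, IsIso (L.map (l.app X))

/-- An object `X` is `L`-local if `l X : X ⟶ L X` is an isomorphism. -/
def LocalizationData.IsLocal {C : Type*} [Category C] (Λ : LocalizationData C) (X : C) : Prop :=
  IsIso (Λ.l.app X)

/-- A morphism `g` is an `L`-equivalence if `L g` is an isomorphism. -/
def LocalizationData.IsEquiv {C : Type*} [Category C] (Λ : LocalizationData C)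
    {X Y : C} (g : X ⟶ Y) : Prop :=
  IsIso (Λ.L.map g)

namespace LocalizationData

variable {C : Type*} [Category C] (Λ : LocalizationData C)

lemma isLocal_L_obj (X : C) : Λ.IsLocal (Λ.L.obj X) := by
  unfold IsLocal
  rw [← Λ.coincide]
  exact Λ.isIso X

lemma hom_ext {Y Z : C} (hZ : Λ.IsLocal Z) {h h' : Λ.L.obj Y ⟶ Z}
    (H : Λ.l.app Y ≫ h = Λ.l.app Y ≫ h') : h = h' := by
  haveI := Λ.isIso Y
  haveI : IsIso (Λ.l.app Z) := hZ
  have hL : Λ.L.map h = Λ.L.map h' := by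
    have := congrArg Λ.L.map H
    simp only [Functor.map_comp] at this
    exact (cancel_epi (Λ.L.map (Λ.l.app Y))).mp this
  have n := Λ.l.naturality h
  have n' := Λ.l.naturality h'
  simp only [Functor.id_map] at n n'
  rw [hL, ← n'] at n
  exact (cancel_mono (Λ.l.app Z)).mp n

lemma exists_lift {Y Z : C} (hZ : Λ.IsLocal Z) (g : Y ⟶ Z) :
    ∃ h : Λ.L.obj Y ⟶ Z, Λ.l.app Y ≫ h = g := by
  haveI : IsIso (Λ.l.app Z) := hZ
  refine ⟨Λ.L.map g ≫ inv (Λ.l.app Z), ?_⟩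
  have n := Λ.l.naturality g
  simp only [Functor.id_map] at n
  rw [← Category.assoc, ← n, Category.assoc, IsIso.hom_inv_id, Category.comp_id]

lemma isEquiv_unit (X : C) : Λ.IsEquiv (Λ.l.app X) := Λ.isIso X

lemma isIso_of_isEquiv_of_isLocal {A B : C} (h : A ⟶ B) (hA : Λ.IsLocal A)
    (hB : Λ.IsLocal B) (he : Λ.IsEquiv h) : IsIso h := by
  haveI : IsIso (Λ.l.app A) := hA
  haveI : IsIso (Λ.l.app B) := hB
  haveI : IsIso (Λ.L.map h) := he
  have n := Λ.l.naturality h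
  simp only [Functor.id_map] at n
  have : h = Λ.l.app A ≫ Λ.L.map h ≫ inv (Λ.l.app B) := by
    rw [← Category.assoc, ← n, Category.assoc, IsIso.hom_inv_id, Category.comp_id]
  rw [this]
  infer_instance

end LocalizationData

/-- `F` preserves local objects iff there is a natural transformation
`β : L₂ ∘ F ⟶ F ∘ L₁` with `β_X ∘ (l₂)_{F X} = F((l₁)_X)`; such `β` is unique, and it
is an isomorphism iff `F` preserves equivalences. -/
theorem preserves_local_iff_exists_comparison_beta
    {C₁ C₂ : Type*} [Category C₁] [Category C₂] (F : C₁ ⥤ C₂)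
    (Λ₁ : LocalizationData C₁) (Λ₂ : LocalizationData C₂) :
    ((∀ X : C₁, Λ₁.IsLocal X → Λ₂.IsLocal (F.obj X)) ↔
      ∃ β : F ⋙ Λ₂.L ⟶ Λ₁.L ⋙ F,
        ∀ X : C₁, Λ₂.l.app (F.obj X) ≫ β.app X = F.map (Λ₁.l.app X)) ∧
    (∀ β β' : F ⋙ Λ₂.L ⟶ Λ₁.L ⋙ F,
      (∀ X : C₁, Λ₂.l.app (F.obj X) ≫ β.app X = F.map (Λ₁.l.app X)) →
      (∀ X : C₁, Λ₂.l.app (F.obj X) ≫ β'.app X = F.map (Λ₁.l.app X)) → β = β') ∧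
    (∀ β : F ⋙ Λ₂.L ⟶ Λ₁.L ⋙ F,
      (∀ X : C₁, Λ₂.l.app (F.obj X) ≫ β.app X = F.map (Λ₁.l.app X)) →
      (IsIso β ↔ ∀ ⦃X Y : C₁⦄ (f : X ⟶ Y), Λ₁.IsEquiv f → Λ₂.IsEquiv (F.map f))) := by
  -- From the existence of β one deduces that `F` preserves local objects.
  have pres : ∀ β : F ⋙ Λ₂.L ⟶ Λ₁.L ⋙ F,
      (∀ X : C₁, Λ₂.l.app (F.obj X) ≫ β.app X = F.map (Λ₁.l.app X)) →
      ∀ X : C₁, Λ₁.IsLocal X → Λ₂.IsLocal (F.obj X) := by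
    intro β hβ X hX
    haveI : IsIso (Λ₁.l.app X) := hX
    refine ⟨β.app X ≫ inv (F.map (Λ₁.l.app X)), ?_, ?_⟩
    · rw [← Category.assoc, hβ X, IsIso.hom_inv_id]
    · apply Λ₂.hom_ext (Λ₂.isLocal_L_obj (F.obj X))
      rw [Category.comp_id, ← Category.assoc, ← Category.assoc, hβ X,
        Category.assoc, IsIso.hom_inv_id_assoc]
  refine ⟨⟨?_, fun ⟨β, hβ⟩ => pres β hβ⟩, ?_, ?_⟩
  · -- existence of β
    intro hF
    choose b hb using fun X : C₁ =>
      Λ₂.exists_lift (hF _ (Λ₁.isLocal_L_obj X)) (F.map (Λ₁.l.app X))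
    simp only [Functor.id_obj] at hb
    refine ⟨{ app := b, naturality := ?_ }, hb⟩
    intro X Y f
    apply Λ₂.hom_ext (hF _ (Λ₁.isLocal_L_obj Y))
    have n := Λ₂.l.naturality (F.map f)
    simp only [Functor.id_map] at n
    have n₁ := Λ₁.l.naturality f
    simp only [Functor.id_map] at n₁
    calc Λ₂.l.app (F.obj X) ≫ (F ⋙ Λ₂.L).map f ≫ b Y
        = (Λ₂.l.app (F.obj X) ≫ Λ₂.L.map (F.map f)) ≫ b Y := by
          simp [Functor.comp_map]
      _ = F.map f ≫ Λ₂.l.app (F.obj Y) ≫ b Y := by rw [← n]; simp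
      _ = F.map f ≫ F.map (Λ₁.l.app Y) := by rw [hb Y]
      _ = F.map (Λ₁.l.app X) ≫ F.map (Λ₁.L.map f) := by
          rw [← Functor.map_comp, ← Functor.map_comp, n₁]
      _ = Λ₂.l.app (F.obj X) ≫ b X ≫ (Λ₁.L ⋙ F).map f := by
          rw [← Category.assoc, hb X]; rfl
  · -- uniqueness
    intro β β' h h'
    ext X
    exact Λ₂.hom_ext (pres β h _ (Λ₁.isLocal_L_obj X)) (by rw [h X, h' X])
  · -- iso iff preserves equivalences
    intro β hβ
    constructor
    · intro hiso X Y f hf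
      haveI : IsIso (Λ₁.L.map f) := hf
      haveI : IsIso (β.app X) := inferInstance
      haveI : IsIso (β.app Y) := inferInstance
      have n := β.naturality f
      have : Λ₂.L.map (F.map f) = β.app X ≫ (Λ₁.L ⋙ F).map f ≫ inv (β.app Y) := by
        rw [← Category.assoc, ← n, Category.assoc, IsIso.hom_inv_id, Category.comp_id]
        rfl
      show IsIso (Λ₂.L.map (F.map f))
      rw [this]
      haveI : IsIso ((Λ₁.L ⋙ F).map f) := by
        show IsIso (F.map (Λ₁.L.map f)); infer_instance
      infer_instance
    · intro hpres
      haveI : ∀ X : C₁, IsIso (β.app X) := by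
        intro X
        apply Λ₂.isIso_of_isEquiv_of_isLocal _ (Λ₂.isLocal_L_obj (F.obj X))
          (pres β hβ _ (Λ₁.isLocal_L_obj X))
        haveI : IsIso (Λ₂.L.map (F.map (Λ₁.l.app X))) := hpres _ (Λ₁.isEquiv_unit X)
        haveI := Λ₂.isIso (F.obj X)
        show IsIso (Λ₂.L.map (β.app X))
        have := congrArg Λ₂.L.map (hβ X)
        simp only [Functor.map_comp] at this
        have : Λ₂.L.map (β.app X) =
            inv (Λ₂.L.map (Λ₂.l.app (F.obj X))) ≫ Λ₂.L.map (F.map (Λ₁.l.app X)) := by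
          rw [← this, IsIso.inv_hom_id_assoc]
        rw [this]
        infer_instance
      apply NatIso.isIso_of_isIso_app
end

section
/- Let (T, η, μ) be a monad on a category C and let (C', c) be a colocalization on C. Then the following are equivalent: (a) T preserves C'-colocal objects; (b) for every T-algebra (X, a) there is a unique T-algebra structure on C'X such that c_X : C'X → X is a morphism of T-algebras; (c) there is a colocalization C'' on the Eilenberg–Moore category C^T such that C' ∘ U ≅ U ∘ C'' naturally, where U is the forgetful functor; (d) there is a colocalization C'' on C^T such that U preserves and reflects colocal objects and preserves and reflects equivalences. -/
open CategoryTheory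

/-- A colocalization (coreflection) on a category `C`: a functor `K : C ⥤ C` with a natural
transformation `c : K ⟶ 𝟭 C` such that `K (c X) = c (K X)` and these morphisms are
isomorphisms. -/
structure ColocalizationData (C : Type*) [Category C] where
  /-- the colocalization functor -/
  K : C ⥤ C
  /-- the counit -/
  c : K ⟶ 𝟭 C
  coincide : ∀ X : C, K.map (c.app X) = c.app (K.obj X)
  isIso : ∀ X : C, IsIso (K.map (c.app X))

/-- An object `X` is colocal if `c X : K X ⟶ X` is an isomorphism. -/
def ColocalizationData.IsColocal {C : Type*} [Category C] (Γ : ColocalizationData C)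
    (X : C) : Prop :=
  IsIso (Γ.c.app X)

/-- A morphism `g` is an equivalence if `K g` is an isomorphism. -/
def ColocalizationData.IsEquiv {C : Type*} [Category C] (Γ : ColocalizationData C)
    {X Y : C} (g : X ⟶ Y) : Prop :=
  IsIso (Γ.K.map g)

namespace ColocalizationData

variable {C : Type*} [Category C] (Γ : ColocalizationData C)

/-- Naturality of the counit, in convenient form. -/
theorem nat {X Y : C} (f : X ⟶ Y) : Γ.K.map f ≫ Γ.c.app Y = Γ.c.app X ≫ f := by
  simpa using Γ.c.naturality f

/-- `K X` is always colocal. -/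
theorem isColocal_K (X : C) : Γ.IsColocal (Γ.K.obj X) := by
  have h := Γ.isIso X
  rw [Γ.coincide X] at h
  exact h

/-- Colocal objects are closed under isomorphism. -/
theorem isColocal_of_iso {X Y : C} (e : X ≅ Y) (hX : Γ.IsColocal X) : Γ.IsColocal Y := by
  haveI : IsIso (Γ.c.app X) := hX
  have : Γ.c.app Y = inv (Γ.K.map e.hom) ≫ Γ.c.app X ≫ e.hom := by
    rw [IsIso.eq_inv_comp, Γ.nat]
  show IsIso (Γ.c.app Y)
  rw [this]
  infer_instance

/-- Morphisms from a colocal object into `K Y` are determined by their composite with the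
counit. -/
theorem hom_ext {W Y : C} (hW : Γ.IsColocal W) {g h : W ⟶ Γ.K.obj Y}
    (e : g ≫ Γ.c.app Y = h ≫ Γ.c.app Y) : g = h := by
  haveI : IsIso (Γ.c.app W) := hW
  haveI := Γ.isIso Y
  have e2 : Γ.K.map g = Γ.K.map h := by
    have e1 := congrArg Γ.K.map e
    simp only [Functor.map_comp] at e1
    exact (cancel_mono (Γ.K.map (Γ.c.app Y))).mp e1
  calc g = inv (Γ.c.app W) ≫ Γ.c.app W ≫ g := by simp
    _ = inv (Γ.c.app W) ≫ Γ.K.map g ≫ Γ.c.app (Γ.K.obj Y) := by rw [Γ.nat g]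
    _ = inv (Γ.c.app W) ≫ Γ.K.map h ≫ Γ.c.app (Γ.K.obj Y) := by rw [e2]
    _ = inv (Γ.c.app W) ≫ Γ.c.app W ≫ h := by rw [Γ.nat h]
    _ = h := by simp

/-- If the counit at `Z` has a section, then `Z` is colocal. -/
theorem isColocal_of_section {Z : C} (s : Z ⟶ Γ.K.obj Z) (hs : s ≫ Γ.c.app Z = 𝟙 Z) :
    Γ.IsColocal Z := by
  have h2 : Γ.c.app Z ≫ s = 𝟙 (Γ.K.obj Z) :=
    Γ.hom_ext (Γ.isColocal_K Z) (by rw [Category.assoc, hs]; simp)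
  exact ⟨s, h2, hs⟩

/-- Colocal objects lift against equivalences. -/
theorem exists_lift {Z V W : C} (hZ : Γ.IsColocal Z) {g : V ⟶ W} (hg : IsIso (Γ.K.map g))
    (f : Z ⟶ W) : ∃ l : Z ⟶ V, l ≫ g = f := by
  haveI : IsIso (Γ.c.app Z) := hZ
  haveI := hg
  refine ⟨inv (Γ.c.app Z) ≫ Γ.K.map f ≫ inv (Γ.K.map g) ≫ Γ.c.app V, ?_⟩
  have h1 : Γ.c.app V ≫ g = Γ.K.map g ≫ Γ.c.app W := (Γ.nat g).symm
  simp only [Category.assoc, h1, IsIso.inv_hom_id_assoc, Γ.nat f, IsIso.inv_hom_id_assoc]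

section Monad

variable {T : Monad C}

/-- The lifted algebra structure on `K A`, when `T` preserves colocal objects. -/
noncomputable def str (hyp : ∀ X : C, Γ.IsColocal X → Γ.IsColocal (T.obj X))
    (A : Monad.Algebra T) : T.obj (Γ.K.obj A.A) ⟶ Γ.K.obj A.A :=
  haveI : IsIso (Γ.c.app (T.obj (Γ.K.obj A.A))) := ⟨IsIso.out (self := hyp _ (Γ.isColocal_K A.A))⟩
  inv (Γ.c.app _) ≫ Γ.K.map (T.map (Γ.c.app A.A) ≫ A.a)

theorem str_c (hyp : ∀ X : C, Γ.IsColocal X → Γ.IsColocal (T.obj X))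
    (A : Monad.Algebra T) :
    Γ.str hyp A ≫ Γ.c.app A.A = T.map (Γ.c.app A.A) ≫ A.a := by
  haveI : IsIso (Γ.c.app (T.obj (Γ.K.obj A.A))) := hyp _ (Γ.isColocal_K A.A)
  rw [str, Category.assoc, Γ.nat, IsIso.inv_hom_id_assoc]

theorem str_unit (hyp : ∀ X : C, Γ.IsColocal X → Γ.IsColocal (T.obj X))
    (A : Monad.Algebra T) :
    T.η.app (Γ.K.obj A.A) ≫ Γ.str hyp A = 𝟙 (Γ.K.obj A.A) := by
  refine Γ.hom_ext (Γ.isColocal_K A.A) ?_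
  have hn : Γ.c.app A.A ≫ T.η.app A.A = T.η.app (Γ.K.obj A.A) ≫ T.map (Γ.c.app A.A) := by
    simpa using T.η.naturality (Γ.c.app A.A)
  rw [Category.assoc, Γ.str_c hyp A, Category.id_comp, ← Category.assoc, ← hn,
    Category.assoc, A.unit]
  simp

theorem str_assoc (hyp : ∀ X : C, Γ.IsColocal X → Γ.IsColocal (T.obj X))
    (A : Monad.Algebra T) :
    T.μ.app (Γ.K.obj A.A) ≫ Γ.str hyp A = T.map (Γ.str hyp A) ≫ Γ.str hyp A := by
  refine Γ.hom_ext (hyp _ (hyp _ (Γ.isColocal_K A.A))) ?_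
  have hc := Γ.str_c hyp A
  have hn : T.map (T.map (Γ.c.app A.A)) ≫ T.μ.app A.A
      = T.μ.app (Γ.K.obj A.A) ≫ T.map (Γ.c.app A.A) := by
    simpa using T.μ.naturality (Γ.c.app A.A)
  calc (T.μ.app (Γ.K.obj A.A) ≫ Γ.str hyp A) ≫ Γ.c.app A.A
      = T.μ.app (Γ.K.obj A.A) ≫ T.map (Γ.c.app A.A) ≫ A.a := by
        rw [Category.assoc, hc]
    _ = T.map (T.map (Γ.c.app A.A)) ≫ T.μ.app A.A ≫ A.a := by
        rw [← Category.assoc, ← hn, Category.assoc]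
    _ = T.map (T.map (Γ.c.app A.A)) ≫ T.map A.a ≫ A.a := by rw [A.assoc]
    _ = T.map (T.map (Γ.c.app A.A) ≫ A.a) ≫ A.a := by rw [T.map_comp, Category.assoc]
    _ = T.map (Γ.str hyp A ≫ Γ.c.app A.A) ≫ A.a := by rw [hc]
    _ = (T.map (Γ.str hyp A) ≫ Γ.str hyp A) ≫ Γ.c.app A.A := by
        rw [T.map_comp, Category.assoc, Category.assoc, hc]

/-- The lifted colocalization functor on the Eilenberg-Moore category. -/
noncomputable def liftedK (hyp : ∀ X : C, Γ.IsColocal X → Γ.IsColocal (T.obj X)) :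
    Monad.Algebra T ⥤ Monad.Algebra T where
  obj A := ⟨Γ.K.obj A.A, Γ.str hyp A, Γ.str_unit hyp A, Γ.str_assoc hyp A⟩
  map {A B} f :=
    { f := Γ.K.map f.f
      h := by
        refine Γ.hom_ext (hyp _ (Γ.isColocal_K A.A)) ?_
        calc (T.map (Γ.K.map f.f) ≫ Γ.str hyp B) ≫ Γ.c.app B.A
            = T.map (Γ.K.map f.f) ≫ T.map (Γ.c.app B.A) ≫ B.a := by
              rw [Category.assoc, Γ.str_c hyp B]
          _ = T.map (Γ.K.map f.f ≫ Γ.c.app B.A) ≫ B.a := by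
              rw [T.map_comp, Category.assoc]
          _ = T.map (Γ.c.app A.A ≫ f.f) ≫ B.a := by rw [Γ.nat f.f]
          _ = T.map (Γ.c.app A.A) ≫ T.map f.f ≫ B.a := by
              rw [T.map_comp, Category.assoc]
          _ = T.map (Γ.c.app A.A) ≫ A.a ≫ f.f := by rw [f.h]
          _ = (Γ.str hyp A ≫ Γ.c.app A.A) ≫ f.f := by
              rw [Γ.str_c hyp A, Category.assoc]
          _ = (Γ.str hyp A ≫ Γ.K.map f.f) ≫ Γ.c.app B.A := by
              rw [Category.assoc, Category.assoc, Γ.nat f.f] }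
  map_id A := by ext; exact Γ.K.map_id A.A
  map_comp f g := by ext; exact Γ.K.map_comp f.f g.f

/-- The lifted counit. -/
noncomputable def liftedc (hyp : ∀ X : C, Γ.IsColocal X → Γ.IsColocal (T.obj X)) :
    Γ.liftedK hyp ⟶ 𝟭 (Monad.Algebra T) where
  app A := ⟨Γ.c.app A.A, (Γ.str_c hyp A).symm⟩
  naturality A B f := by ext; exact Γ.nat f.f

/-- The lifted colocalization on the Eilenberg-Moore category, when `T` preserves colocal
objects. -/
noncomputable def lifted (hyp : ∀ X : C, Γ.IsColocal X → Γ.IsColocal (T.obj X)) :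
    ColocalizationData (Monad.Algebra T) where
  K := Γ.liftedK hyp
  c := Γ.liftedc hyp
  coincide A := Monad.Algebra.Hom.ext (Γ.coincide A.A)
  isIso A := by
    haveI : IsIso (T.forget.map ((Γ.liftedK hyp).map ((Γ.liftedc hyp).app A))) :=
      Γ.isIso A.A
    exact isIso_of_reflects_iso _ T.forget

/-- Shared key lemma: a colocalization on the algebra category whose counit is suitably
compatible with `Γ` forces `T` to preserve colocal objects. -/
theorem key (Γ' : ColocalizationData (Monad.Algebra T))
    (h1 : ∀ A : Monad.Algebra T, Γ.IsColocal (Γ'.K.obj A).A)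
    (h2 : ∀ A : Monad.Algebra T, IsIso (Γ.K.map (Γ'.c.app A).f)) :
    ∀ X : C, Γ.IsColocal X → Γ.IsColocal (T.obj X) := by
  intro X hX
  let A : Monad.Algebra T := ⟨T.obj X, T.μ.app X, T.left_unit X, (T.assoc X).symm⟩
  haveI : IsIso (Γ.c.app (Γ'.K.obj A).A) := h1 A
  obtain ⟨h, hh⟩ := Γ.exists_lift hX (h2 A) (T.η.app X)
  have hmor : T.map (Γ'.c.app A).f ≫ T.μ.app X = (Γ'.K.obj A).a ≫ (Γ'.c.app A).f :=
    (Γ'.c.app A).h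
  have hn : Γ.K.map (Γ'.c.app A).f ≫ Γ.c.app (T.obj X)
      = Γ.c.app (Γ'.K.obj A).A ≫ (Γ'.c.app A).f := Γ.nat ((Γ'.c.app A).f)
  refine Γ.isColocal_of_section
    (T.map h ≫ (Γ'.K.obj A).a ≫ inv (Γ.c.app (Γ'.K.obj A).A) ≫ Γ.K.map (Γ'.c.app A).f) ?_
  calc (T.map h ≫ (Γ'.K.obj A).a ≫ inv (Γ.c.app (Γ'.K.obj A).A) ≫ Γ.K.map (Γ'.c.app A).f)
        ≫ Γ.c.app (T.obj X)
      = T.map h ≫ (Γ'.K.obj A).a ≫ inv (Γ.c.app (Γ'.K.obj A).A)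
        ≫ Γ.c.app (Γ'.K.obj A).A ≫ (Γ'.c.app A).f := by
        rw [Category.assoc, Category.assoc, Category.assoc, hn]
    _ = T.map h ≫ (Γ'.K.obj A).a ≫ (Γ'.c.app A).f := by rw [IsIso.inv_hom_id_assoc]
    _ = T.map h ≫ T.map (Γ'.c.app A).f ≫ T.μ.app X := by rw [← hmor]
    _ = T.map (h ≫ (Γ'.c.app A).f) ≫ T.μ.app X := by rw [T.map_comp, Category.assoc]
    _ = T.map (T.η.app X) ≫ T.μ.app X := by rw [hh]
    _ = 𝟙 (T.obj X) := T.right_unit X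

end Monad

end ColocalizationData

/-- For a monad `T` and a colocalization `(C', c)` on `C`, the following
are equivalent: (a) `T` preserves colocal objects; (b) every `T`-algebra structure lifts
uniquely to the colocalization; (c) there is a colocalization `C''` on `C^T` with
`C' ∘ U ≅ U ∘ C''`; (d) there is a colocalization `C''` on `C^T` such that `U` preserves and
reflects colocal objects and equivalences. -/
theorem colocalization_monad_tfae
    {C : Type*} [Category C] (T : Monad C) (Γ : ColocalizationData C) :
    ((∀ X : C, Γ.IsColocal X → Γ.IsColocal (T.obj X)) ↔
      (∀ A : Monad.Algebra T,
        ∃! a' : T.obj (Γ.K.obj A.A) ⟶ Γ.K.obj A.A,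
          (T.η.app (Γ.K.obj A.A) ≫ a' = 𝟙 (Γ.K.obj A.A) ∧
            T.μ.app (Γ.K.obj A.A) ≫ a' = T.map a' ≫ a') ∧
          a' ≫ Γ.c.app A.A = T.map (Γ.c.app A.A) ≫ A.a)) ∧
    ((∀ X : C, Γ.IsColocal X → Γ.IsColocal (T.obj X)) ↔
      (∃ Γ' : ColocalizationData (Monad.Algebra T),
        Nonempty (T.forget ⋙ Γ.K ≅ Γ'.K ⋙ T.forget))) ∧
    ((∀ X : C, Γ.IsColocal X → Γ.IsColocal (T.obj X)) ↔
      (∃ Γ' : ColocalizationData (Monad.Algebra T),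
        (∀ A : Monad.Algebra T, Γ'.IsColocal A ↔ Γ.IsColocal (T.forget.obj A)) ∧
        (∀ ⦃A B : Monad.Algebra T⦄ (g : A ⟶ B),
          Γ'.IsEquiv g ↔ Γ.IsEquiv (T.forget.map g)))) := by
  refine ⟨⟨fun hyp A => ?ab, fun hb X hX => ?ba⟩,
    ⟨fun hyp => ⟨Γ.lifted hyp, ⟨?ac⟩⟩, fun ⟨Γ', ⟨φ⟩⟩ => ?ca⟩,
    ⟨fun hyp => ⟨Γ.lifted hyp, ?ad, ?ad2⟩, fun ⟨Γ', hcol, heq⟩ => ?da⟩⟩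
  case ab =>
    refine ⟨Γ.str hyp A, ⟨⟨Γ.str_unit hyp A, Γ.str_assoc hyp A⟩, Γ.str_c hyp A⟩, ?_⟩
    rintro y ⟨-, hy⟩
    exact Γ.hom_ext (hyp _ (Γ.isColocal_K A.A)) (by rw [hy, Γ.str_c hyp A])
  case ba =>
    haveI : IsIso (Γ.c.app X) := hX
    obtain ⟨a', ⟨-, hc⟩, -⟩ := hb ⟨T.obj X, T.μ.app X, T.left_unit X, (T.assoc X).symm⟩
    refine Γ.isColocal_of_section (T.map (inv (Γ.c.app X) ≫ Γ.K.map (T.η.app X)) ≫ a') ?_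
    have hn : Γ.K.map (T.η.app X) ≫ Γ.c.app (T.obj X) = Γ.c.app X ≫ T.η.app X :=
      Γ.nat (T.η.app X)
    rw [Category.assoc, hc, ← Category.assoc, ← T.map_comp, Category.assoc, hn,
      IsIso.inv_hom_id_assoc]
    exact T.right_unit X
  case ac =>
    exact NatIso.ofComponents (fun A => Iso.refl _) (by
      intro A B f
      simp [ColocalizationData.lifted, ColocalizationData.liftedK]
      exact (Category.comp_id _).trans (Category.id_comp _).symm)
  case ca =>
    refine Γ.key Γ' (fun A => Γ.isColocal_of_iso (φ.app A) (Γ.isColocal_K A.A)) (fun A => ?_)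
    haveI : IsIso (T.forget.map (Γ'.K.map (Γ'.c.app A))) := by
      haveI := Γ'.isIso A
      infer_instance
    have e : Γ.K.map (Γ'.c.app A).f ≫ φ.hom.app A
        = φ.hom.app (Γ'.K.obj A) ≫ T.forget.map (Γ'.K.map (Γ'.c.app A)) :=
      φ.hom.naturality (Γ'.c.app A)
    have e2 : Γ.K.map (Γ'.c.app A).f
        = φ.hom.app (Γ'.K.obj A) ≫ T.forget.map (Γ'.K.map (Γ'.c.app A)) ≫ inv (φ.hom.app A) := by
      rw [← Category.assoc, ← e]; exact (Category.comp_id _).symm.trans ((congrArg (Γ.K.map (Γ'.c.app A).f ≫ ·) (@IsIso.hom_inv_id _ _ _ _ (φ.hom.app A) (NatIso.hom_app_isIso φ A)).symm).trans (Category.assoc _ _ _).symm)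
    rw [e2]
    exact IsIso.comp_isIso' (NatIso.hom_app_isIso φ _) (IsIso.comp_isIso' this (@IsIso.inv_isIso _ _ _ _ (φ.hom.app A) (NatIso.hom_app_isIso φ A)))
  case ad =>
    intro A
    constructor
    · intro hA
      haveI : IsIso ((Γ.lifted hyp).c.app A) := hA
      show IsIso (Γ.c.app A.A)
      have : Γ.c.app A.A = T.forget.map ((Γ.lifted hyp).c.app A) := rfl
      rw [this]
      exact Functor.map_isIso _ _
    · intro hA
      haveI : IsIso (T.forget.map ((Γ.lifted hyp).c.app A)) := hA
      exact isIso_of_reflects_iso _ T.forget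
  case ad2 =>
    intro A B g
    constructor
    · intro hg
      haveI : IsIso ((Γ.lifted hyp).K.map g) := hg
      show IsIso (Γ.K.map g.f)
      have : Γ.K.map g.f = T.forget.map ((Γ.lifted hyp).K.map g) := rfl
      rw [this]
      exact Functor.map_isIso _ _
    · intro hg
      haveI : IsIso (T.forget.map ((Γ.lifted hyp).K.map g)) := hg
      exact isIso_of_reflects_iso _ T.forget
  case da =>
    refine Γ.key Γ' (fun A => (hcol _).mp (Γ'.isColocal_K A)) (fun A => ?_)
    exact (heq (Γ'.c.app A)).mp (Γ'.isIso A)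
end
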